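/- Define X_l, Y_l by the recursion Y_0 = γ, X_l = min of d_R−1 independent copies of Y_l, and Y_l = γ + sum of d_L−1 independent copies of X_{l−1}, with fresh independent copies of γ at each variable node. Set c_1 = min over t ≥ 0 of E[e^{−t X_0}], c_2 = (d_R−1)·E[e^{−tγ}] (at the minimizing t), and c = c_1 · c_2^{1/(d_L−2)}. If c < 1 and d_L, d_R > 2, then P(Σ_{i=1}^{d_L} X_{T−1}^{(i)} ≤ 0) ≤ c^{d_L·(d_L−1)^{T−1} − d_L}. -/

import Mathlib

open MeasureTheory ProbabilityTheory Real

/-- The min-sum recursion on a `(d_L, d_R)`-regular tree: `Y_0 = ω_0·γ`; for `0 ≤ l < T`,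
`X_l` is the minimum of `d_R − 1` mutually independent copies of `Y_l`; and for `0 < l < T`,
`Y_l = ω_l·γ' + X_{l−1}^{(1)} + … + X_{l−1}^{(d_L−1)}` with a fresh copy `γ'` of `γ` and
mutually independent copies of `X_{l−1}`, all mutually independent. -/
structure MinSumRecursion {Ω : Type*} [MeasurableSpace Ω] (μ : MeasureTheory.Measure Ω)
    (γ : Ω → ℝ) (ω : ℕ → ℝ) (dL dR T : ℕ) (X Y : ℕ → Ω → ℝ) : Prop where
  hY0 : IdentDistrib (Y 0) (fun o => ω 0 * γ o) μ μ
  hX : ∀ l < T, ∃ Z : Fin (dR - 1) → Ω → ℝ,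
      iIndepFun Z μ ∧
      (∀ i, IdentDistrib (Z i) (Y l) μ μ) ∧
      ∀ o, X l o = sInf (Set.range fun i => Z i o)
  hY : ∀ l, 0 < l → l < T → ∃ (g : Ω → ℝ) (Z : Fin (dL - 1) → Ω → ℝ),
      IdentDistrib g γ μ μ ∧
      (∀ i, IdentDistrib (Z i) (X (l - 1)) μ μ) ∧
      iIndepFun
        (fun o : Option (Fin (dL - 1)) => Option.elim o g Z) μ ∧
      ∀ o, Y l o = ω l * g o + ∑ i, Z i o


lemma aux_iIndepFun_ae_eq {Ω ι : Type*} [MeasurableSpace Ω] {μ : Measure Ω}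
    {f g : ι → Ω → ℝ} (hf : iIndepFun f μ)
    (h : ∀ i, f i =ᵐ[μ] g i) : iIndepFun g μ := by
  rw [iIndepFun_iff_measure_inter_preimage_eq_mul] at hf ⊢
  intro S sets H
  have hS : ∀ᵐ o ∂μ, ∀ i ∈ S, f i o = g i o := by
    have := (MeasureTheory.ae_ball_iff (μ := μ) S.countable_toSet
      (p := fun o i _ => f i o = g i o)).2 (fun i _ => h i)
    filter_upwards [this] with o ho i hi using ho i hi
  have h1 : (⋂ i ∈ S, g i ⁻¹' sets i) =ᵐ[μ] (⋂ i ∈ S, f i ⁻¹' sets i) := by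
    rw [Filter.eventuallyEq_set]
    filter_upwards [hS] with o ho
    simp only [Set.mem_iInter, Set.mem_preimage]
    exact ⟨fun hh i hi => (ho i hi) ▸ hh i hi,
           fun hh i hi => (ho i hi) ▸ hh i hi⟩
  rw [measure_congr h1, hf S H]
  refine Finset.prod_congr rfl fun i hi => measure_congr ?_
  rw [Filter.eventuallyEq_set]
  filter_upwards [h i] with o ho
  simp [Set.mem_preimage, ho]

def geomE (m : ℕ) : ℕ → ℕ
  | 0 => 0
  | (l+1) => m * geomE m l + 1

lemma geomE_spec (m : ℕ) (hm : 1 ≤ m) : ∀ l : ℕ, (m - 1) * geomE m l + 1 = m ^ l := by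
  intro l
  induction l with
  | zero => simp [geomE]
  | succ n ih =>
    have : (m - 1) * geomE m (n+1) + 1 = m * ((m - 1) * geomE m n + 1) := by
      simp only [geomE]
      have h1 : m - 1 + 1 = m := Nat.succ_pred_eq_of_pos hm
      ring_nf
      omega
    rw [this, ih, pow_succ]
    ring

/-- Uniform-weight error bound for the `(T, 1^T)` min-sum process: with
`c₁ = min_{t ≥ 0} E[e^{−tX_0}]`, `c₂ = (d_R−1)·E[e^{−t*γ}]` at the minimizing `t*`, and
`c = c₁·c₂^{1/(d_L−2)}`, if `c < 1` and `d_L, d_R > 2` then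
`P(Σ_{i=1}^{d_L} X_{T−1}^{(i)} ≤ 0) ≤ c^{d_L·(d_L−1)^{T−1} − d_L}`. -/
theorem uniform_weight_process_bound
    {Ω : Type*} [MeasurableSpace Ω] (μ : MeasureTheory.Measure Ω) [IsProbabilityMeasure μ]
    (γ : Ω → ℝ) (dL dR T : ℕ) (hdL : 2 < dL) (hdR : 2 < dR) (hT : 1 ≤ T)
    (X Y : ℕ → Ω → ℝ)
    (hrec : MinSumRecursion μ γ (fun _ => 1) dL dR T X Y)
    (hmeasγ : Measurable γ) (hmeasX : ∀ l, Measurable (X l)) (hmeasY : ∀ l, Measurable (Y l))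
    (hintγ : ∀ t : ℝ, 0 ≤ t → Integrable (fun o => exp (-t * γ o)) μ)
    (hintX : ∀ (l : ℕ) (t : ℝ), 0 ≤ t → Integrable (fun o => exp (-t * X l o)) μ)
    (hintY : ∀ (l : ℕ) (t : ℝ), 0 ≤ t → Integrable (fun o => exp (-t * Y l o)) μ)
    (tstar : ℝ) (htstar : 0 ≤ tstar)
    (hmin : ∀ t : ℝ, 0 ≤ t →
      ∫ o, exp (-tstar * X 0 o) ∂μ ≤ ∫ o, exp (-t * X 0 o) ∂μ)
    (c₁ c₂ c : ℝ)
    (hc₁ : c₁ = ∫ o, exp (-tstar * X 0 o) ∂μ)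
    (hc₂ : c₂ = ((dR : ℝ) - 1) * ∫ o, exp (-tstar * γ o) ∂μ)
    (hc : c = c₁ * c₂ ^ ((1 : ℝ) / ((dL : ℝ) - 2)))
    (hclt : c < 1)
    (S : Fin dL → Ω → ℝ)
    (hSindep : iIndepFun S μ)
    (hSident : ∀ i, IdentDistrib (S i) (X (T - 1)) μ μ)
    (hSmeas : ∀ i, Measurable (S i)) :
    (μ {o | ∑ i, S i o ≤ 0}).toReal ≤ c ^ (dL * (dL - 1) ^ (T - 1) - dL) := by

  classical
  have hexpM : Measurable fun x : ℝ => exp (-tstar * x) := (measurable_id.const_mul _).exp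
  have key : ∀ f h : Ω → ℝ, IdentDistrib f h μ μ →
      ∫ o, exp (-tstar * f o) ∂μ = ∫ o, exp (-tstar * h o) ∂μ := by
    intro f h hfh
    exact (hfh.comp hexpM).integral_eq
  have keyInt : ∀ f h : Ω → ℝ, IdentDistrib f h μ μ →
      Integrable (fun o => exp (-tstar * h o)) μ →
      Integrable (fun o => exp (-tstar * f o)) μ := by
    intro f h hfh hint
    exact ((hfh.comp hexpM).integrable_iff).2 hint
  have hanonneg : ∀ l, 0 ≤ ∫ o, exp (-tstar * X l o) ∂μ :=
    fun l => integral_nonneg fun o => (exp_pos _).le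
  have hγnonneg : 0 ≤ ∫ o, exp (-tstar * γ o) ∂μ := integral_nonneg fun o => (exp_pos _).le
  have hc₁0 : 0 ≤ c₁ := hc₁ ▸ hanonneg 0
  have hc₂0 : 0 ≤ c₂ := by
    rw [hc₂]
    have h1 : (1:ℝ) ≤ (dR:ℝ) := by exact_mod_cast Nat.one_le_cast.mpr (by omega)
    exact mul_nonneg (by linarith) hγnonneg
  have hc₁1 : c₁ ≤ 1 := by
    have := hmin 0 le_rfl
    simpa [hc₁] using this
  -- step a : min over dR-1 copies
  have hdR1 : 0 < dR - 1 := by omega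
  have astep : ∀ l, l < T → ∫ o, exp (-tstar * X l o) ∂μ ≤
      ((dR:ℝ) - 1) * ∫ o, exp (-tstar * Y l o) ∂μ := by
    intro l hl
    obtain ⟨Z, hZind, hZid, hZeq⟩ := hrec.hX l hl
    have hZint : ∀ i, Integrable (fun o => exp (-tstar * Z i o)) μ :=
      fun i => keyInt _ _ (hZid i) (hintY l tstar htstar)
    have hpt : ∀ o, exp (-tstar * X l o) ≤ ∑ i, exp (-tstar * Z i o) := by
      intro o
      have hne : (Set.range fun i => Z i o).Nonempty := ⟨Z ⟨0, hdR1⟩ o, ⟨_, rfl⟩⟩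
      obtain ⟨i₀, hi₀⟩ := hne.csInf_mem (Set.finite_range _)
      rw [hZeq o, ← hi₀]
      exact Finset.single_le_sum (f := fun i => exp (-tstar * Z i o))
        (fun i _ => (exp_pos _).le) (Finset.mem_univ i₀)
    calc ∫ o, exp (-tstar * X l o) ∂μ ≤ ∫ o, ∑ i, exp (-tstar * Z i o) ∂μ :=
          integral_mono (hintX l tstar htstar)
            (integrable_finset_sum _ fun i _ => hZint i) hpt
      _ = ∑ i, ∫ o, exp (-tstar * Z i o) ∂μ := integral_finset_sum _ fun i _ => hZint i
      _ = ∑ _i : Fin (dR - 1), ∫ o, exp (-tstar * Y l o) ∂μ :=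
          Finset.sum_congr rfl fun i _ => key _ _ (hZid i)
      _ = ((dR:ℝ) - 1) * ∫ o, exp (-tstar * Y l o) ∂μ := by
          rw [Finset.sum_const, Finset.card_univ, Fintype.card_fin, nsmul_eq_mul]
          congr 1
          rw [Nat.cast_sub (by omega : 1 ≤ dR), Nat.cast_one]
  -- step b : product over dL-1 copies plus fresh γ
  have bstep : ∀ l, 0 < l → l < T → ∫ o, exp (-tstar * Y l o) ∂μ =
      (∫ o, exp (-tstar * γ o) ∂μ) * (∫ o, exp (-tstar * X (l - 1) o) ∂μ) ^ (dL - 1) := by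
    intro l hl0 hlT
    obtain ⟨g, Z, hgid, hZid, hind, hYeq⟩ := hrec.hY l hl0 hlT
    have hgae : AEMeasurable g μ := hgid.aemeasurable_fst
    have hZae : ∀ i, AEMeasurable (Z i) μ := fun i => (hZid i).aemeasurable_fst
    set g' : Ω → ℝ := hgae.mk g with hg'def
    set Z' : Fin (dL - 1) → Ω → ℝ := fun i => (hZae i).mk (Z i) with hZ'def
    set W' : Option (Fin (dL - 1)) → Ω → ℝ := fun j => Option.elim j g' Z' with hW'def
    have hW'meas : ∀ j, Measurable (W' j) := by
      rintro (_ | i)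
      · exact hgae.measurable_mk
      · exact (hZae i).measurable_mk
    have hindep' : iIndepFun W' μ := by
      refine aux_iIndepFun_ae_eq hind ?_
      rintro (_ | i)
      · exact hgae.ae_eq_mk
      · exact (hZae i).ae_eq_mk
    have hsum := hindep'.mgf_sum (t := -tstar) hW'meas Finset.univ
    have hZall : ∀ᵐ o ∂μ, ∀ i, Z i o = Z' i o := ae_all_iff.2 fun i => (hZae i).ae_eq_mk
    have hYae : (fun o => exp (-tstar * Y l o)) =ᵐ[μ]
        fun o => exp (-tstar * (∑ j, W' j) o) := by
      filter_upwards [hgae.ae_eq_mk, hZall] with o hg0 hZ0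
      have hws : (∑ j, W' j) o = g' o + ∑ i, Z' i o := by
        rw [Finset.sum_apply, Fintype.sum_option]
        rfl
      have hg0' : g o = g' o := by simp only [hg'def]; exact hg0
      have hzs : ∑ i, Z i o = ∑ i, Z' i o :=
        Finset.sum_congr rfl fun i _ => by simp only [hZ'def]; exact hZ0 i
      rw [hYeq o, hws, one_mul, hg0', hzs]
    have hmgfg : mgf g' μ (-tstar) = ∫ o, exp (-tstar * γ o) ∂μ := by
      have h1 : (fun o => exp (-tstar * g' o)) =ᵐ[μ] fun o => exp (-tstar * g o) := by
        filter_upwards [hgae.ae_eq_mk] with o hg0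
        have hg0' : g o = g' o := by simp only [hg'def]; exact hg0
        rw [← hg0']
      calc mgf g' μ (-tstar) = ∫ o, exp (-tstar * g o) ∂μ := integral_congr_ae h1
        _ = ∫ o, exp (-tstar * γ o) ∂μ := key _ _ hgid
    have hmgfZ : ∀ i, mgf (Z' i) μ (-tstar) = ∫ o, exp (-tstar * X (l - 1) o) ∂μ := by
      intro i
      have h1 : (fun o => exp (-tstar * Z' i o)) =ᵐ[μ] fun o => exp (-tstar * Z i o) := by
        filter_upwards [(hZae i).ae_eq_mk] with o hz
        have hz' : Z i o = Z' i o := by simp only [hZ'def]; exact hz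
        rw [← hz']
      calc mgf (Z' i) μ (-tstar) = ∫ o, exp (-tstar * Z i o) ∂μ := integral_congr_ae h1
        _ = ∫ o, exp (-tstar * X (l - 1) o) ∂μ := key _ _ (hZid i)
    calc ∫ o, exp (-tstar * Y l o) ∂μ = mgf (∑ j, W' j) μ (-tstar) :=
          integral_congr_ae hYae
      _ = ∏ j, mgf (W' j) μ (-tstar) := hsum
      _ = mgf g' μ (-tstar) * ∏ i : Fin (dL - 1), mgf (Z' i) μ (-tstar) :=
          Fintype.prod_option _
      _ = (∫ o, exp (-tstar * γ o) ∂μ) *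
          (∫ o, exp (-tstar * X (l - 1) o) ∂μ) ^ (dL - 1) := by
          rw [hmgfg]
          congr 1
          rw [Finset.prod_congr rfl fun i _ => hmgfZ i, Finset.prod_const,
            Finset.card_univ, Fintype.card_fin]
  -- main induction
  have main : ∀ l, l < T → ∫ o, exp (-tstar * X l o) ∂μ ≤
      c₁ ^ ((dL - 1) ^ l) * c₂ ^ geomE (dL - 1) l := by
    intro l
    induction l with
    | zero =>
      intro _
      simp [geomE, hc₁]
    | succ n ih =>
      intro h
      have hn : n < T := by omega
      have h1 := astep (n + 1) h
      have h2 := bstep (n + 1) (Nat.succ_pos n) h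
      rw [h2] at h1
      simp only [Nat.add_sub_cancel] at h1
      have h3 : ∫ o, exp (-tstar * X (n + 1) o) ∂μ ≤
          c₂ * (∫ o, exp (-tstar * X n o) ∂μ) ^ (dL - 1) := by
        rw [hc₂, mul_assoc]
        exact h1
      calc ∫ o, exp (-tstar * X (n + 1) o) ∂μ
          ≤ c₂ * (∫ o, exp (-tstar * X n o) ∂μ) ^ (dL - 1) := h3
        _ ≤ c₂ * (c₁ ^ ((dL - 1) ^ n) * c₂ ^ geomE (dL - 1) n) ^ (dL - 1) := by
            exact mul_le_mul_of_nonneg_left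
              (pow_le_pow_left₀ (hanonneg n) (ih hn) _) hc₂0
        _ = c₁ ^ ((dL - 1) ^ (n + 1)) * c₂ ^ geomE (dL - 1) (n + 1) := by
            rw [mul_pow, ← pow_mul, ← pow_mul]
            show c₂ * (c₁ ^ ((dL-1)^n * (dL-1)) * c₂ ^ (geomE (dL-1) n * (dL-1))) = _
            rw [show (dL-1)^n * (dL-1) = (dL-1)^(n+1) from (pow_succ _ _).symm]
            rw [show geomE (dL-1) (n+1) = (dL-1) * geomE (dL-1) n + 1 from rfl]
            rw [pow_add, pow_one, mul_comm (geomE (dL-1) n) (dL-1)]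
            ring
  -- Chernoff bound for the final sum
  have hSint : ∀ i, Integrable (fun o => exp (-tstar * S i o)) μ :=
    fun i => keyInt _ _ (hSident i) (hintX (T - 1) tstar htstar)
  have hsumint : Integrable (fun o => exp (-tstar * (∑ i, S i) o)) μ :=
    hSindep.integrable_exp_mul_sum hSmeas fun i _ => hSint i
  have hcher := measure_le_le_exp_mul_mgf (μ := μ) (X := ∑ i, S i) (t := -tstar) 0
    (neg_nonpos.2 htstar) hsumint
  have hset : {o | (∑ i, S i) o ≤ 0} = {o | ∑ i, S i o ≤ 0} := by
    ext o
    simp [Finset.sum_apply]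
  simp only [hset, mul_zero, exp_zero, one_mul] at hcher
  have hmgfsum : mgf (∑ i, S i) μ (-tstar) =
      (∫ o, exp (-tstar * X (T - 1) o) ∂μ) ^ dL := by
    rw [hSindep.mgf_sum hSmeas Finset.univ]
    have hkS : ∀ i : Fin dL, mgf (S i) μ (-tstar) =
        ∫ o, exp (-tstar * X (T - 1) o) ∂μ := fun i => key _ _ (hSident i)
    rw [Finset.prod_congr rfl fun i _ => hkS i]
    rw [Finset.prod_const, Finset.card_univ, Fintype.card_fin]
  rw [hmgfsum] at hcher
  -- put everything together
  have hm1 : 1 ≤ dL - 1 := by omega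
  have hTm : T - 1 < T := by omega
  have hbound : (μ {o | ∑ i, S i o ≤ 0}).toReal ≤
      c₁ ^ (dL * (dL - 1) ^ (T - 1)) * c₂ ^ (dL * geomE (dL - 1) (T - 1)) := by
    refine hcher.trans ?_
    calc (∫ o, exp (-tstar * X (T - 1) o) ∂μ) ^ dL
        ≤ (c₁ ^ ((dL - 1) ^ (T - 1)) * c₂ ^ geomE (dL - 1) (T - 1)) ^ dL :=
          pow_le_pow_left₀ (hanonneg _) (main (T - 1) hTm) _
      _ = c₁ ^ (dL * (dL - 1) ^ (T - 1)) * c₂ ^ (dL * geomE (dL - 1) (T - 1)) := by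
          rw [mul_pow, ← pow_mul, ← pow_mul, mul_comm ((dL-1)^(T-1)) dL,
            mul_comm (geomE (dL-1) (T-1)) dL]
  -- exponent arithmetic
  set E := geomE (dL - 1) (T - 1) with hE
  have hgeom : (dL - 2) * E + 1 = (dL - 1) ^ (T - 1) := by
    have := geomE_spec (dL - 1) (by omega) (T - 1)
    have hk : dL - 1 - 1 = dL - 2 := by omega
    rw [hk] at this
    exact this
  set N := dL * (dL - 1) ^ (T - 1) - dL with hN
  have hNeq : N = dL * (dL - 2) * E := by
    have h1 : dL * (dL - 1) ^ (T - 1) = dL * ((dL - 2) * E) + dL := by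
      rw [← hgeom]; ring
    have h2 : dL * (dL - 2) * E = dL * ((dL - 2) * E) := by ring
    omega
  have hNdL : dL * (dL - 1) ^ (T - 1) = N + dL := by
    have h2 : 1 ≤ (dL - 1) ^ (T - 1) := Nat.one_le_pow _ _ (by omega)
    have : dL ≤ dL * (dL - 1) ^ (T - 1) := Nat.le_mul_of_pos_right _ (by omega)
    omega
  have hcN : c ^ N = c₁ ^ N * c₂ ^ (dL * E) := by
    rw [hc, mul_pow]
    congr 1
    have hk0 : ((dL : ℝ) - 2) = ((dL - 2 : ℕ) : ℝ) := by
      rw [Nat.cast_sub (by omega : 2 ≤ dL)]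
      norm_num
    have hkne : ((dL - 2 : ℕ) : ℝ) ≠ 0 := Nat.cast_ne_zero.mpr (by omega)
    rw [← Real.rpow_natCast (c₂ ^ ((1:ℝ)/((dL:ℝ) - 2))) N, ← Real.rpow_mul hc₂0]
    have hexp : (1:ℝ) / ((dL:ℝ) - 2) * (N : ℝ) = ((dL * E : ℕ) : ℝ) := by
      rw [hk0, hNeq]
      push_cast
      field_simp
    rw [hexp, Real.rpow_natCast]
  rw [hcN]
  refine hbound.trans ?_
  rw [hNdL]
  exact mul_le_mul_of_nonneg_right
    (pow_le_pow_of_le_one hc₁0 hc₁1 (Nat.le_add_right N dL))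
    (pow_nonneg hc₂0 _)
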